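/- Let K be an algebraically closed field of characteristic zero and V, W finite-dimensional K[x,y]-modules with associated Lie algebras L_V = K⟨P,Q⟩ ⋉ V and L_W = K⟨S,T⟩ ⋉ W. Suppose there is a Lie algebra isomorphism φ: L_V → L_W such that dim (φ(V)+W)/W = 1 and dim (φ(K⟨P,Q⟩)+W)/W = 1. Then V and W are weakly isomorphic K[x,y]-modules. -/

import Mathlib

/-- The bracket of the semidirect product `L_V = K⟨P,Q⟩ ⋉ V` on `(K × K) × V`. -/
def lieBk {K V : Type*} [Field K] [AddCommGroup V] [Module K V]
    (P Q : V →ₗ[K] V) (a b : (K × K) × V) : (K × K) × V :=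
  (0, (a.1.1 • P + a.1.2 • Q) b.2 - (b.1.1 • P + b.1.2 • Q) a.2)

/-- The abelian ideal `{0} ⊕ V` of `L_V`. -/
def vEmb (K V : Type*) [Field K] [AddCommGroup V] [Module K V] :
    Submodule K ((K × K) × V) :=
  (⊥ : Submodule K (K × K)).prod (⊤ : Submodule K V)

/-- The subalgebra `K⟨P,Q⟩ = K² ⊕ {0}` of `L_V`. -/
def pqEmb (K V : Type*) [Field K] [AddCommGroup V] [Module K V] :
    Submodule K ((K × K) × V) :=
  (⊤ : Submodule K (K × K)).prod (⊥ : Submodule K V)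

/-- Weak isomorphism of the `K[x,y]`-modules given by operator pairs `(P,Q)` and
`(S,T)`: some twist of `(S,T)` by an invertible 2×2 matrix is isomorphic to `(P,Q)`. -/
def WeakIso {K V W : Type*} [Field K] [AddCommGroup V] [Module K V]
    [AddCommGroup W] [Module K W] (P Q : V →ₗ[K] V) (S T : W →ₗ[K] W) : Prop :=
  ∃ M : Matrix (Fin 2) (Fin 2) K, IsUnit M ∧ ∃ e : V ≃ₗ[K] W,
    ∀ v, e (P v) = (M 0 0 • S + M 0 1 • T) (e v) ∧
         e (Q v) = (M 1 0 • S + M 1 1 • T) (e v)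

lemma aux_cross {K : Type*} [Field K] {u v : K × K}
    (h : u.1 * v.2 - u.2 * v.1 = 0) (hu : u ≠ 0) : ∃ k : K, v = k • u := by
  rcases eq_or_ne u.1 0 with h1 | h1
  · have h2 : u.2 ≠ 0 := by
      intro h2
      exact hu (Prod.ext h1 h2)
    have hv1 : v.1 = 0 := by
      have hz : u.2 * v.1 = 0 := by linear_combination -h + v.2 * h1
      rcases mul_eq_zero.mp hz with h' | h'
      · exact absurd h' h2
      · exact h'
    refine ⟨v.2 / u.2, Prod.ext ?_ ?_⟩
    · show v.1 = _ • u.1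
      rw [smul_eq_mul, h1, mul_zero, hv1]
    · show v.2 = _ • u.2
      rw [smul_eq_mul]
      field_simp
  · refine ⟨v.1 / u.1, Prod.ext ?_ ?_⟩
    · show v.1 = _ • u.1
      rw [smul_eq_mul]
      field_simp
    · show v.2 = _ • u.2
      rw [smul_eq_mul]
      field_simp
      linear_combination h

lemma aux_vEmb (K V : Type*) [Field K] [AddCommGroup V] [Module K V] :
    LinearMap.range (LinearMap.inr K (K × K) V) = vEmb K V := by
  ext x
  simp [vEmb, LinearMap.mem_range, Prod.ext_iff, eq_comm]

lemma aux_pqEmb (K V : Type*) [Field K] [AddCommGroup V] [Module K V] :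
    LinearMap.range (LinearMap.inl K (K × K) V) = pqEmb K V := by
  ext x
  simp [pqEmb, LinearMap.mem_range, Prod.ext_iff, eq_comm]

set_option synthInstance.maxHeartbeats 1000000 in
lemma aux_rank {K W : Type*} [Field K] [AddCommGroup W] [Module K W]
    [FiniteDimensional K W] (N : Submodule K ((K × K) × W))
    (h : Module.finrank K ↥(N ⊔ vEmb K W) = Module.finrank K ↥(vEmb K W) + 1) :
    Module.finrank K ↥(N.map (LinearMap.fst K (K × K) W)) = 1 := by
  have hker : LinearMap.ker (LinearMap.fst K (K × K) W) = vEmb K W := by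
    ext x
    simp [vEmb, LinearMap.mem_ker]
  set M := N ⊔ vEmb K W with hM
  have hle : vEmb K W ≤ M := le_sup_right
  have hrn := LinearMap.finrank_range_add_finrank_ker
      ((LinearMap.fst K (K × K) W).domRestrict M)
  rw [LinearMap.range_domRestrict, LinearMap.ker_domRestrict, hker] at hrn
  have hcomap : Module.finrank K ↥((vEmb K W).comap M.subtype)
      = Module.finrank K ↥(vEmb K W) :=
    (Submodule.comapSubtypeEquivOfLe hle).finrank_eq
  rw [hcomap, h] at hrn
  have hbot : (vEmb K W).map (LinearMap.fst K (K × K) W) = ⊥ := by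
    ext y
    simp only [Submodule.mem_map, Submodule.mem_bot, vEmb, Submodule.mem_prod,
      Submodule.mem_top]
    constructor
    · rintro ⟨x, ⟨hx1, -⟩, rfl⟩
      exact hx1
    · rintro rfl
      exact ⟨(0, 0), ⟨rfl, trivial⟩, rfl⟩
  have hmap : M.map (LinearMap.fst K (K × K) W) = N.map (LinearMap.fst K (K × K) W) := by
    rw [hM, Submodule.map_sup, hbot, sup_bot_eq]
  rw [hmap] at hrn
  omega

set_option maxHeartbeats 1000000 in
/-- Lemma 6: if a Lie algebra isomorphism φ : L_V → L_W satisfies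
dim (φ(V)+W)/W = 1 and dim (φ(K⟨P,Q⟩)+W)/W = 1, then V and W are weakly
isomorphic. -/
theorem stmt_16 {K V W : Type*} [Field K] [IsAlgClosed K] [CharZero K]
    [AddCommGroup V] [Module K V] [AddCommGroup W] [Module K W]
    [FiniteDimensional K V] [FiniteDimensional K W]
    (P Q : V →ₗ[K] V) (S T : W →ₗ[K] W)
    (hPQ : ∀ v, P (Q v) = Q (P v)) (hST : ∀ w, S (T w) = T (S w))
    (φ : ((K × K) × V) ≃ₗ[K] ((K × K) × W))
    (hφ : ∀ a b, φ (lieBk P Q a b) = lieBk S T (φ a) (φ b))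
    (hV1 : Module.finrank K
        ↥((vEmb K V).map (φ : ((K × K) × V) →ₗ[K] (K × K) × W) ⊔ vEmb K W)
      = Module.finrank K ↥(vEmb K W) + 1)
    (hPQ1 : Module.finrank K
        ↥((pqEmb K V).map (φ : ((K × K) × V) →ₗ[K] (K × K) × W) ⊔ vEmb K W)
      = Module.finrank K ↥(vEmb K W) + 1) :
    WeakIso P Q S T := by
  classical
  set Lφ : ((K × K) × V) →ₗ[K] (K × K) × W := (φ : ((K × K) × V) →ₗ[K] (K × K) × W)
    with hLφ
  set F : V →ₗ[K] K × K :=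
    (LinearMap.fst K (K × K) W) ∘ₗ Lφ ∘ₗ (LinearMap.inr K (K × K) V) with hFdef
  set G : (K × K) →ₗ[K] K × K :=
    (LinearMap.fst K (K × K) W) ∘ₗ Lφ ∘ₗ (LinearMap.inl K (K × K) V) with hGdef
  set ψ : V →ₗ[K] W :=
    (LinearMap.snd K (K × K) W) ∘ₗ Lφ ∘ₗ (LinearMap.inr K (K × K) V) with hψdef
  set χ : (K × K) →ₗ[K] W :=
    (LinearMap.snd K (K × K) W) ∘ₗ Lφ ∘ₗ (LinearMap.inl K (K × K) V) with hχdef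
  have hφ1 : ∀ (x : K × K) (v : V), φ ((x, v)) = (G x + F v, χ x + ψ v) := by
    intro x v
    have hsplit : ((x, v) : (K × K) × V) = ((x, 0) : (K × K) × V) + ((0, v) : (K × K) × V) := by
      simp
    have h1 : φ ((x, (0 : V))) = (G x, χ x) := by
      rw [hGdef, hχdef]
      simp only [LinearMap.comp_apply, LinearMap.inl_apply, LinearMap.fst_apply,
        LinearMap.snd_apply, hLφ, LinearEquiv.coe_coe]
    have h2 : φ (((0 : K × K), v)) = (F v, ψ v) := by
      rw [hFdef, hψdef]
      simp only [LinearMap.comp_apply, LinearMap.inr_apply, LinearMap.fst_apply,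
        LinearMap.snd_apply, hLφ, LinearEquiv.coe_coe]
    rw [hsplit, map_add, h1, h2]
    simp [Prod.ext_iff]
  -- rank facts
  have hFrank : Module.finrank K ↥(LinearMap.range F) = 1 := by
    have h1 : LinearMap.range F
        = ((vEmb K V).map Lφ).map (LinearMap.fst K (K × K) W) := by
      rw [hFdef, LinearMap.range_comp, LinearMap.range_comp, aux_vEmb]
    rw [h1]
    exact aux_rank _ hV1
  have hGrank : Module.finrank K ↥(LinearMap.range G) = 1 := by
    have h1 : LinearMap.range G
        = ((pqEmb K V).map Lφ).map (LinearMap.fst K (K × K) W) := by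
      rw [hGdef, LinearMap.range_comp, LinearMap.range_comp, aux_pqEmb]
    rw [h1]
    exact aux_rank _ hPQ1
  -- choose cc and lam
  obtain ⟨cc, hcmem, hc0⟩ : ∃ cc, cc ∈ LinearMap.range F ∧ cc ≠ 0 := by
    have hne : LinearMap.range F ≠ ⊥ := by
      intro hbot
      rw [hbot] at hFrank
      simp at hFrank
    obtain ⟨c, hc, h0⟩ := (Submodule.ne_bot_iff _).mp hne
    exact ⟨c, hc, h0⟩
  have hFspan : Submodule.span K {cc} = LinearMap.range F := by
    apply Submodule.eq_of_le_of_finrank_le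
    · rw [Submodule.span_le, Set.singleton_subset_iff]
      exact hcmem
    · rw [hFrank, finrank_span_singleton hc0]
  have hF : ∀ v : V, ∃ a : K, F v = a • cc := by
    intro v
    have hmem : F v ∈ Submodule.span K {cc} := by
      rw [hFspan]
      exact ⟨v, rfl⟩
    obtain ⟨a, ha⟩ := Submodule.mem_span_singleton.mp hmem
    exact ⟨a, ha.symm⟩
  have hccancel : ∀ a b : K, a • cc = b • cc → a = b := by
    intro a b hab
    have h0 : (a - b) • cc = 0 := by rw [sub_smul, hab, sub_self]
    rcases smul_eq_zero.mp h0 with h' | h'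
    · exact sub_eq_zero.mp h'
    · exact absurd h' hc0
  let lam : V →ₗ[K] K :=
    { toFun := fun v => Classical.choose (hF v)
      map_add' := by
        intro v v'
        apply hccancel
        rw [add_smul, ← Classical.choose_spec (hF v), ← Classical.choose_spec (hF v'),
          ← Classical.choose_spec (hF (v + v')), map_add]
      map_smul' := by
        intro a v
        apply hccancel
        rw [RingHom.id_apply, smul_eq_mul, mul_smul, ← Classical.choose_spec (hF v),
          ← Classical.choose_spec (hF (a • v)), map_smul] }
  have hlam : ∀ v : V, F v = lam v • cc := fun v => Classical.choose_spec (hF v)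
  -- choose dd, x₁, x₀
  obtain ⟨dd, hdmem, hd0⟩ : ∃ dd, dd ∈ LinearMap.range G ∧ dd ≠ 0 := by
    have hne : LinearMap.range G ≠ ⊥ := by
      intro hbot
      rw [hbot] at hGrank
      simp at hGrank
    obtain ⟨d, hd, h0⟩ := (Submodule.ne_bot_iff _).mp hne
    exact ⟨d, hd, h0⟩
  obtain ⟨x₁, hx₁⟩ := hdmem
  have hGspan : Submodule.span K {dd} = LinearMap.range G := by
    apply Submodule.eq_of_le_of_finrank_le
    · rw [Submodule.span_le, Set.singleton_subset_iff]
      exact ⟨x₁, hx₁⟩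
    · rw [hGrank, finrank_span_singleton hd0]
  have hG : ∀ x : K × K, ∃ k : K, G x = k • dd := by
    intro x
    have hmem : G x ∈ Submodule.span K {dd} := by
      rw [hGspan]
      exact ⟨x, rfl⟩
    obtain ⟨k, hk⟩ := Submodule.mem_span_singleton.mp hmem
    exact ⟨k, hk.symm⟩
  have hkerrank : Module.finrank K ↥(LinearMap.ker G) = 1 := by
    have hrn := LinearMap.finrank_range_add_finrank_ker G
    rw [hGrank] at hrn
    have h2 : Module.finrank K (K × K) = 2 := by
      rw [Module.finrank_prod, Module.finrank_self]
    omega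
  obtain ⟨x₀, hx₀mem, hx₀0⟩ : ∃ x₀, x₀ ∈ LinearMap.ker G ∧ x₀ ≠ 0 := by
    have hne : LinearMap.ker G ≠ ⊥ := by
      intro hbot
      rw [hbot] at hkerrank
      simp at hkerrank
    obtain ⟨x, hx, h0⟩ := (Submodule.ne_bot_iff _).mp hne
    exact ⟨x, hx, h0⟩
  have hGx₀ : G x₀ = 0 := hx₀mem
  have hkerspan : Submodule.span K {x₀} = LinearMap.ker G := by
    apply Submodule.eq_of_le_of_finrank_le
    · rw [Submodule.span_le, Set.singleton_subset_iff]
      exact hx₀mem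
    · rw [hkerrank, finrank_span_singleton hx₀0]
  have hker : ∀ x : K × K, G x = 0 → ∃ t : K, x = t • x₀ := by
    intro x hx
    have hmem : x ∈ Submodule.span K {x₀} := by
      rw [hkerspan]
      exact hx
    obtain ⟨t, ht⟩ := Submodule.mem_span_singleton.mp hmem
    exact ⟨t, ht.symm⟩
  -- v₁
  obtain ⟨v₁, hv₁⟩ : ∃ v₁ : V, lam v₁ = 1 := by
    obtain ⟨v', hv'⟩ := hcmem
    refine ⟨v', hccancel _ _ ?_⟩
    rw [← hlam v', hv', one_smul]
  -- surjectivity of the K² projection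
  have hsurj : ∀ y : K × K, ∃ (x : K × K) (v : V), G x + lam v • cc = y := by
    intro y
    obtain ⟨z, hz⟩ := φ.surjective ((y, (0 : W)))
    refine ⟨z.1, z.2, ?_⟩
    have h := hφ1 z.1 z.2
    rw [Prod.mk.eta, hz] at h
    have h1 := congrArg Prod.fst h
    simp only at h1
    rw [← hlam]
    exact h1.symm
  -- cross products nonzero
  have hE : cc.1 * dd.2 - cc.2 * dd.1 ≠ 0 := by
    intro h0
    obtain ⟨k, hk⟩ := aux_cross h0 hc0
    have hsp : ∀ y : K × K, ∃ a : K, y = a • cc := by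
      intro y
      obtain ⟨x, v, hxv⟩ := hsurj y
      obtain ⟨k', hk'⟩ := hG x
      refine ⟨k' * k + lam v, ?_⟩
      rw [← hxv, hk', hk, smul_smul, add_smul]
    obtain ⟨a, ha⟩ := hsp (1, 0)
    obtain ⟨b, hb⟩ := hsp (0, 1)
    have ha1 : (1 : K) = a * cc.1 := congrArg Prod.fst ha
    have ha2 : (0 : K) = a * cc.2 := congrArg Prod.snd ha
    have hb2 : (1 : K) = b * cc.2 := congrArg Prod.snd hb
    have hane : a ≠ 0 := by
      intro h
      rw [h, zero_mul] at ha1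
      exact one_ne_zero ha1
    have hcc2 : cc.2 = 0 := by
      rcases mul_eq_zero.mp ha2.symm with h' | h'
      · exact absurd h' hane
      · exact h'
    rw [hcc2, mul_zero] at hb2
    exact one_ne_zero hb2
  have hD : x₀.1 * x₁.2 - x₀.2 * x₁.1 ≠ 0 := by
    intro h0
    obtain ⟨k, hk⟩ := aux_cross h0 hx₀0
    apply hd0
    rw [← hx₁, hk, map_smul, hGx₀, smul_zero]
  have hcombo : ∀ m k : K, m • cc + k • dd = 0 → m = 0 ∧ k = 0 := by
    intro m k h
    have h1 : m * cc.1 + k * dd.1 = 0 := congrArg Prod.fst h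
    have h2 : m * cc.2 + k * dd.2 = 0 := congrArg Prod.snd h
    have hm : m * (cc.1 * dd.2 - cc.2 * dd.1) = 0 := by
      linear_combination dd.2 * h1 - dd.1 * h2
    have hm0 : m = 0 := by
      rcases mul_eq_zero.mp hm with h' | h'
      · exact h'
      · exact absurd h' hE
    have hk0 : k = 0 := by
      have hkd : k • dd = 0 := by
        rw [hm0, zero_smul, zero_add] at h
        exact h
      rcases smul_eq_zero.mp hkd with h' | h'
      · exact h'
      · exact absurd h' hd0
    exact ⟨hm0, hk0⟩
  -- the operators A and B
  set A : W →ₗ[K] W := cc.1 • S + cc.2 • T with hAdef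
  set B : W →ₗ[K] W := dd.1 • S + dd.2 • T with hBdef
  have hAapp : ∀ w : W, A w = cc.1 • S w + cc.2 • T w := by
    intro w
    rw [hAdef]
    simp
  have hBapp : ∀ w : W, B w = dd.1 • S w + dd.2 • T w := by
    intro w
    rw [hBdef]
    simp
  -- the master bracket identity
  have hbr : ∀ (x : K × K) (v : V),
      lam ((x.1 • P + x.2 • Q) v) = 0 ∧
      ψ ((x.1 • P + x.2 • Q) v)
        = ((G x).1 • S + (G x).2 • T) (ψ v) - lam v • A (χ x) := by
    intro x v
    have h := hφ ((x, (0 : V))) (((0 : K × K), v))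
    have hLHS : lieBk P Q ((x, (0 : V))) (((0 : K × K), v))
        = (((0 : K × K), (x.1 • P + x.2 • Q) v) : (K × K) × V) := by
      simp [lieBk]
    rw [hLHS, hφ1, hφ1 x 0, hφ1 0 v] at h
    simp only [map_zero, add_zero, zero_add] at h
    rw [hlam v] at h
    have h1 := congrArg Prod.fst h
    have h2 := congrArg Prod.snd h
    simp only [lieBk] at h1 h2
    constructor
    · have hz : lam ((x.1 • P + x.2 • Q) v) • cc = 0 := by
        rw [← hlam]
        exact h1
      rcases smul_eq_zero.mp hz with h' | h'
      · exact h'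
      · exact absurd h' hc0
    · rw [h2]
      simp only [Prod.smul_fst, Prod.smul_snd, smul_eq_mul, hAapp,
        LinearMap.add_apply, LinearMap.smul_apply]
      module
  set w₀ : W := χ x₀ with hw₀def
  set w₁ : W := χ x₁ with hw₁def
  have hbrP : ∀ v : V,
      lam ((x₀.1 • P + x₀.2 • Q) v) = 0 ∧
      ψ ((x₀.1 • P + x₀.2 • Q) v) = -(lam v • A w₀) := by
    intro v
    obtain ⟨ha, hb⟩ := hbr x₀ v
    refine ⟨ha, ?_⟩
    rw [hb, hGx₀, ← hw₀def]
    simp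
  have hbrQ : ∀ v : V,
      lam ((x₁.1 • P + x₁.2 • Q) v) = 0 ∧
      ψ ((x₁.1 • P + x₁.2 • Q) v) = B (ψ v) - lam v • A w₁ := by
    intro v
    obtain ⟨ha, hb⟩ := hbr x₁ v
    refine ⟨ha, ?_⟩
    rw [hb, hx₁, hBdef]
  -- A kills ψ of ker lam
  have hVV : ∀ v : V, A (ψ v) = lam v • A (ψ v₁) := by
    intro v
    have h := hφ (((0 : K × K), v₁)) (((0 : K × K), v))
    have hLHS : lieBk P Q (((0 : K × K), v₁)) (((0 : K × K), v)) = 0 := by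
      simp [lieBk]
    rw [hLHS, map_zero, hφ1 0 v₁, hφ1 0 v] at h
    simp only [map_zero, zero_add] at h
    rw [hlam v, hlam v₁] at h
    have h2 := congrArg Prod.snd (h.symm)
    simp only [lieBk] at h2
    have h2' : (lam v₁ • cc).1 • S (ψ v) + (lam v₁ • cc).2 • T (ψ v)
        - ((lam v • cc).1 • S (ψ v₁) + (lam v • cc).2 • T (ψ v₁)) = 0 := by
      simpa [LinearMap.add_apply, LinearMap.smul_apply] using h2
    simp only [Prod.smul_fst, Prod.smul_snd, smul_eq_mul, hv₁, one_mul] at h2'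
    rw [hAapp, hAapp]
    have : cc.1 • S (ψ v) + cc.2 • T (ψ v)
        = (lam v * cc.1) • S (ψ v₁) + (lam v * cc.2) • T (ψ v₁) := by
      linear_combination (norm := module) h2'
    rw [this]
    module
  have hBw₀ : B w₀ = 0 := by
    have h := hφ ((x₁, (0 : V))) ((x₀, (0 : V)))
    have hLHS : lieBk P Q ((x₁, (0 : V))) ((x₀, (0 : V))) = 0 := by
      simp [lieBk]
    rw [hLHS, map_zero, hφ1 x₁ 0, hφ1 x₀ 0] at h
    simp only [map_zero, add_zero] at h
    have h2 := congrArg Prod.snd (h.symm)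
    simp only [lieBk, hGx₀, hx₁] at h2
    have h2' : dd.1 • S w₀ + dd.2 • T w₀ = 0 := by
      simpa [hw₀def, LinearMap.add_apply, LinearMap.smul_apply] using h2
    rw [hBapp]
    exact h2'
  -- decomposition of W
  have hdec : ∀ w : W, ∃ (a : K) (u : V), lam u = 0 ∧ w = a • w₀ + ψ u := by
    intro w
    obtain ⟨z, hz⟩ := φ.surjective (((0 : K × K), w))
    have h := hφ1 z.1 z.2
    rw [Prod.mk.eta, hz] at h
    have h1 := congrArg Prod.fst h.symm
    have h2 := congrArg Prod.snd h.symm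
    simp only at h1 h2
    obtain ⟨k, hk⟩ := hG z.1
    have hcomb : lam z.2 • cc + k • dd = 0 := by
      rw [← hlam, ← hk]
      rw [add_comm]
      exact h1
    obtain ⟨hm0, hk0⟩ := hcombo _ _ hcomb
    have hGz : G z.1 = 0 := by rw [hk, hk0, zero_smul]
    obtain ⟨t, ht⟩ := hker z.1 hGz
    refine ⟨t, z.2, hm0, ?_⟩
    rw [← h2, ht, map_smul, hw₀def]
  obtain ⟨s, u₁, hu₁, hs⟩ := hdec (ψ v₁)
  obtain ⟨r, u₂, hu₂, hr⟩ := hdec w₁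
  have hAker : ∀ u : V, lam u = 0 → A (ψ u) = 0 := by
    intro u hu
    rw [hVV u, hu, zero_smul]
  -- the candidate isomorphism
  set eL : V →ₗ[K] W := ψ + lam.smulRight ((1 - s) • w₀) with heLdef
  have heL : ∀ v : V, eL v = ψ v + lam v • ((1 - s) • w₀) := by
    intro v
    rw [heLdef]
    simp [LinearMap.smulRight_apply]
  have hAψv₁ : A (ψ v₁) = s • A w₀ := by
    rw [hs, map_add, map_smul, hAker u₁ hu₁, add_zero]
  have hAe : ∀ v : V, A (eL v) = lam v • A w₀ := by
    intro v
    rw [heL, map_add, map_smul, map_smul, hVV v, hAψv₁]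
    module
  have hAw₁ : A w₁ = r • A w₀ := by
    rw [hr, map_add, map_smul, hAker u₂ hu₂, add_zero]
  -- surjectivity and injectivity of eL
  have hesurj : Function.Surjective eL := by
    intro w
    obtain ⟨a, u, hu, hwdec⟩ := hdec w
    refine ⟨u - a • u₁ + a • v₁, ?_⟩
    rw [heL]
    simp only [map_add, map_sub, map_smul, hu, hu₁, hv₁, smul_eq_mul, mul_zero, mul_one,
      sub_zero, zero_add, zero_sub]
    rw [hs, hwdec]
    module
  have hdim : Module.finrank K V = Module.finrank K W := by
    have h := φ.finrank_eq
    simp only [Module.finrank_prod] at h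
    omega
  have heinj : Function.Injective eL :=
    (LinearMap.injective_iff_surjective_of_finrank_eq_finrank hdim).mpr hesurj
  -- the intertwining identities
  have hP' : ∀ v : V, eL ((x₀.1 • P + x₀.2 • Q) v) = -(lam v • A w₀) := by
    intro v
    rw [heL, (hbrP v).2, (hbrP v).1, zero_smul, add_zero]
  have hQ' : ∀ v : V, eL ((x₁.1 • P + x₁.2 • Q) v) = B (eL v) - r • A (eL v) := by
    intro v
    rw [heL, (hbrQ v).2, (hbrQ v).1, zero_smul, add_zero, hAw₁]
    have h1 : B (ψ v + lam v • ((1 - s) • w₀))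
        = B (ψ v) + (lam v * (1 - s)) • B w₀ := by
      rw [map_add, map_smul, map_smul, smul_smul]
    rw [show (ψ v + lam v • ((1 - s) • w₀)) = eL v from (heL v).symm] at h1
    rw [h1, hBw₀, smul_zero, add_zero, hAe]
    module
  -- scalar data for the final matrix
  set Dd : K := x₀.1 * x₁.2 - x₀.2 * x₁.1 with hDddef
  set n00 : K := x₁.2 / Dd with hn00
  set n01 : K := -x₀.2 / Dd with hn01
  set n10 : K := -x₁.1 / Dd with hn10
  set n11 : K := x₀.1 / Dd with hn11
  have e11 : n00 * x₀.1 + n01 * x₁.1 = 1 := by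
    rw [hn00, hn01, div_mul_eq_mul_div, div_mul_eq_mul_div, ← add_div,
      div_eq_iff hD, hDddef]
    ring
  have e12 : n00 * x₀.2 + n01 * x₁.2 = 0 := by
    rw [hn00, hn01, div_mul_eq_mul_div, div_mul_eq_mul_div, ← add_div,
      div_eq_iff hD]
    ring
  have e21 : n10 * x₀.1 + n11 * x₁.1 = 0 := by
    rw [hn10, hn11, div_mul_eq_mul_div, div_mul_eq_mul_div, ← add_div,
      div_eq_iff hD]
    ring
  have e22 : n10 * x₀.2 + n11 * x₁.2 = 1 := by
    rw [hn10, hn11, div_mul_eq_mul_div, div_mul_eq_mul_div, ← add_div,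
      div_eq_iff hD, hDddef]
    ring
  have hPv : ∀ v : V, P v
      = n00 • ((x₀.1 • P + x₀.2 • Q) v) + n01 • ((x₁.1 • P + x₁.2 • Q) v) := by
    intro v
    have h : n00 • ((x₀.1 • P + x₀.2 • Q) v) + n01 • ((x₁.1 • P + x₁.2 • Q) v)
        = (n00 * x₀.1 + n01 * x₁.1) • P v + (n00 * x₀.2 + n01 * x₁.2) • Q v := by
      simp only [LinearMap.add_apply, LinearMap.smul_apply]
      module
    rw [h, e11, e12, one_smul, zero_smul, add_zero]
  have hQv : ∀ v : V, Q v
      = n10 • ((x₀.1 • P + x₀.2 • Q) v) + n11 • ((x₁.1 • P + x₁.2 • Q) v) := by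
    intro v
    have h : n10 • ((x₀.1 • P + x₀.2 • Q) v) + n11 • ((x₁.1 • P + x₁.2 • Q) v)
        = (n10 * x₀.1 + n11 * x₁.1) • P v + (n10 * x₀.2 + n11 * x₁.2) • Q v := by
      simp only [LinearMap.add_apply, LinearMap.smul_apply]
      module
    rw [h, e21, e22, one_smul, zero_smul, zero_add]
  set Mx : Matrix (Fin 2) (Fin 2) K :=
    !![n00 * (-cc.1) + n01 * (dd.1 - r * cc.1), n00 * (-cc.2) + n01 * (dd.2 - r * cc.2);
       n10 * (-cc.1) + n11 * (dd.1 - r * cc.1), n10 * (-cc.2) + n11 * (dd.2 - r * cc.2)]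
    with hMx
  have hM00 : Mx 0 0 = n00 * (-cc.1) + n01 * (dd.1 - r * cc.1) := by
    rw [hMx]; rfl
  have hM01 : Mx 0 1 = n00 * (-cc.2) + n01 * (dd.2 - r * cc.2) := by
    rw [hMx]; rfl
  have hM10 : Mx 1 0 = n10 * (-cc.1) + n11 * (dd.1 - r * cc.1) := by
    rw [hMx]; rfl
  have hM11 : Mx 1 1 = n10 * (-cc.2) + n11 * (dd.2 - r * cc.2) := by
    rw [hMx]; rfl
  refine ⟨Mx, ?_, LinearEquiv.ofBijective eL (show Function.Bijective eL from ⟨heinj, hesurj⟩), ?_⟩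
  · rw [Matrix.isUnit_iff_isUnit_det, hMx, Matrix.det_fin_two_of, isUnit_iff_ne_zero]
    have hn : n00 * n11 - n01 * n10 = 1 / Dd := by
      rw [hn00, hn01, hn10, hn11, div_mul_div_comm, div_mul_div_comm, div_sub_div_same,
        div_eq_div_iff (mul_ne_zero hD hD) hD, hDddef]
      ring
    have hdet : (n00 * (-cc.1) + n01 * (dd.1 - r * cc.1))
          * (n10 * (-cc.2) + n11 * (dd.2 - r * cc.2))
        - (n00 * (-cc.2) + n01 * (dd.2 - r * cc.2))
          * (n10 * (-cc.1) + n11 * (dd.1 - r * cc.1))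
        = (n00 * n11 - n01 * n10)
          * ((-cc.1) * (dd.2 - r * cc.2) - (-cc.2) * (dd.1 - r * cc.1)) := by
      ring
    rw [hdet, hn]
    refine mul_ne_zero (one_div_ne_zero hD) ?_
    have h2 : (-cc.1) * (dd.2 - r * cc.2) - (-cc.2) * (dd.1 - r * cc.1)
        = -(cc.1 * dd.2 - cc.2 * dd.1) := by ring
    rw [h2]
    exact neg_ne_zero.mpr hE
  · intro v
    simp only [LinearEquiv.ofBijective_apply]
    constructor
    · have h0 : eL (P v) = n00 • eL ((x₀.1 • P + x₀.2 • Q) v)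
          + n01 • eL ((x₁.1 • P + x₁.2 • Q) v) := by
        conv_lhs => rw [hPv v]
        rw [map_add, map_smul, map_smul]
      rw [h0, hP', hQ', hM00, hM01, ← hAe v]
      simp only [LinearMap.add_apply, LinearMap.smul_apply, hAapp, hBapp]
      module
    · have h0 : eL (Q v) = n10 • eL ((x₀.1 • P + x₀.2 • Q) v)
          + n11 • eL ((x₁.1 • P + x₁.2 • Q) v) := by
        conv_lhs => rw [hQv v]
        rw [map_add, map_smul, map_smul]
      rw [h0, hP', hQ', hM10, hM11, ← hAe v]
      simp only [LinearMap.add_apply, LinearMap.smul_apply, hAapp, hBapp]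
      module
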